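/- Grade-6 identity: let P be a unitary 3×3 complex matrix, let a₁, a₂, a₃ be real numbers with a₁ + a₂ + a₃ = 0, set b_i = (ia_i/2)·P·D_i·Pᴴ and B = b₁ + b₂ + b₃. Then ssin(b₁)·ssin(b₂)·ssin(b₃) = (1/4)·tr(ssin(B))·𝟙. -/

import Mathlib

open Matrix

lemma sin_sum_zero (u v w : ℂ) (h : u + v + w = 0) :
    Complex.sin u + Complex.sin v + Complex.sin w =
      -4 * (Complex.sin (u/2) * Complex.sin (v/2) * Complex.sin (w/2)) := by
  obtain rfl : w = -(u + v) := by linear_combination h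
  have h2 : ∀ z : ℂ, Complex.sin z = 2 * Complex.sin (z/2) * Complex.cos (z/2) := by
    intro z
    have := Complex.sin_two_mul (z/2)
    rw [show 2 * (z/2) = z by ring] at this
    exact this
  rw [h2 u, h2 v, h2 (-(u+v)), show (-(u+v))/2 = -(u/2 + v/2) by ring,
    Complex.sin_neg, Complex.cos_neg, Complex.sin_add, Complex.cos_add]
  have hx := Complex.sin_sq_add_cos_sq (u/2)
  have hy := Complex.sin_sq_add_cos_sq (v/2)
  linear_combination (-2*Complex.sin (u/2)*Complex.cos (u/2))*hy +
    (-2*Complex.sin (v/2)*Complex.cos (v/2))*hx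

lemma half_exp_sub (t : ℝ) :
    (1/2 : ℂ) * (Complex.exp ((t:ℂ)*Complex.I) - (starRingEnd ℂ) (Complex.exp ((t:ℂ)*Complex.I)))
      = Complex.sin (t:ℂ) * Complex.I := by
  rw [← Complex.exp_conj, _root_.map_mul, Complex.conj_I, Complex.conj_ofReal, mul_neg, ← neg_mul,
    Complex.exp_mul_I, Complex.exp_mul_I, Complex.sin_neg, Complex.cos_neg]
  ring

lemma exp_conj_diag (P : Matrix (Fin 3) (Fin 3) ℂ) (hP : P * Pᴴ = 1) (v : Fin 3 → ℂ) :
    NormedSpace.exp (P * Matrix.diagonal v * Pᴴ)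
      = P * Matrix.diagonal (fun j => Complex.exp (v j)) * Pᴴ := by
  have hinv : P⁻¹ = Pᴴ := Matrix.inv_eq_right_inv hP
  have hdet : IsUnit P.det := IsUnit.of_mul_eq_one Pᴴ.det
    (by rw [← Matrix.det_mul, hP, Matrix.det_one])
  have hU : IsUnit P := (Matrix.isUnit_iff_isUnit_det P).mpr hdet
  rw [← hinv, Matrix.exp_conj P _ hU, Matrix.exp_diagonal]
  congr 1
  ext j
  rw [Pi.exp_def]
  simp [Complex.exp_eq_exp_ℂ]

lemma conj_mul3 (P : Matrix (Fin 3) (Fin 3) ℂ) (hP' : Pᴴ * P = 1) (u v : Fin 3 → ℂ) :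
    (P * Matrix.diagonal u * Pᴴ) * (P * Matrix.diagonal v * Pᴴ)
      = P * Matrix.diagonal (fun j => u j * v j) * Pᴴ := by
  have h : (P * Matrix.diagonal u * Pᴴ) * (P * Matrix.diagonal v * Pᴴ)
      = P * (Matrix.diagonal u * ((Pᴴ * P) * (Matrix.diagonal v))) * Pᴴ := by
    simp only [Matrix.mul_assoc]
  rw [h, hP', one_mul, Matrix.diagonal_mul_diagonal]

/-- `ssin M = (exp M − (exp M)ᴴ)/2`. -/
noncomputable def ssin (M : Matrix (Fin 3) (Fin 3) ℂ) : Matrix (Fin 3) (Fin 3) ℂ :=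
  (1/2 : ℂ) • (NormedSpace.exp M - (NormedSpace.exp M)ᴴ)

lemma ssindiag (P : Matrix (Fin 3) (Fin 3) ℂ) (hP : P * Pᴴ = 1) (v : Fin 3 → ℂ) :
    ssin (P * Matrix.diagonal v * Pᴴ)
      = P * Matrix.diagonal (fun j =>
          (1/2 : ℂ) * (Complex.exp (v j) - (starRingEnd ℂ) (Complex.exp (v j)))) * Pᴴ := by
  unfold ssin
  rw [exp_conj_diag P hP]
  rw [Matrix.conjTranspose_mul, Matrix.conjTranspose_mul, Matrix.diagonal_conjTranspose,
    Matrix.conjTranspose_conjTranspose]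
  simp only [Matrix.mul_assoc]
  rw [← Matrix.mul_sub, ← Matrix.sub_mul, Matrix.diagonal_sub]
  have hD : (Matrix.diagonal fun j =>
        (1/2 : ℂ) * (Complex.exp (v j) - (starRingEnd ℂ) (Complex.exp (v j))))
      = (1/2 : ℂ) • (Matrix.diagonal fun i =>
          Complex.exp (v i) - star (fun j => Complex.exp (v j)) i) := by
    rw [← Matrix.diagonal_smul]
    congr 1
  rw [hD, smul_mul_assoc, mul_smul_comm]

/-- Grade-6 identity: with `P` unitary, `a₁ + a₂ + a₃ = 0`,
`bᵢ = (iaᵢ/2) • P • Dᵢ • Pᴴ` and `B = b₁ + b₂ + b₃`, we have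
`ssin b₁ * ssin b₂ * ssin b₃ = (1/4)tr(ssin B) • 𝟙`. -/
theorem grade_six_identity
    (P : Matrix (Fin 3) (Fin 3) ℂ) (hP : P * Pᴴ = 1)
    (a : Fin 3 → ℝ) (hsum : a 0 + a 1 + a 2 = 0)
    (b : Fin 3 → Matrix (Fin 3) (Fin 3) ℂ)
    (hb : ∀ i, b i = ((a i : ℂ) * Complex.I / 2) •
        (P * Matrix.diagonal (fun j => if j = i then (1 : ℂ) else -1) * Pᴴ))
    (B : Matrix (Fin 3) (Fin 3) ℂ) (hB : B = b 0 + b 1 + b 2) :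
    ssin (b 0) * ssin (b 1) * ssin (b 2)
      = ((1/4 : ℂ) * (ssin B).trace) • (1 : Matrix (Fin 3) (Fin 3) ℂ) := by
  have hP' : Pᴴ * P = 1 := mul_eq_one_comm.mp hP
  have hsumC : (a 0 : ℂ) + (a 1 : ℂ) + (a 2 : ℂ) = 0 := by exact_mod_cast hsum
  set e : Fin 3 → Fin 3 → ℝ := fun i j => (if j = i then a i else -(a i)) / 2 with he
  have hb' : ∀ i, b i = P * Matrix.diagonal (fun j => ((e i j : ℝ) : ℂ) * Complex.I) * Pᴴ := by
    intro i
    rw [hb i]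
    have hfun : (fun j => ((e i j : ℝ) : ℂ) * Complex.I)
        = ((a i : ℂ) * Complex.I / 2) • (fun j => if j = i then (1 : ℂ) else -1) := by
      funext j
      by_cases h : j = i <;> simp only [he, h, if_pos, if_true, if_neg, Pi.smul_apply,
        smul_eq_mul, if_false, not_false_iff] <;> push_cast <;> ring
    rw [hfun, Matrix.diagonal_smul, mul_smul_comm, smul_mul_assoc]
  have hssin : ∀ i, ssin (b i)
      = P * Matrix.diagonal (fun j => Complex.sin ((e i j : ℝ) : ℂ) * Complex.I) * Pᴴ := by
    intro i
    rw [hb' i, ssindiag P hP]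
    simp only [half_exp_sub]
  have hdsum : (Matrix.diagonal fun j => ((e 0 j : ℝ) : ℂ) * Complex.I)
        + (Matrix.diagonal fun j => ((e 1 j : ℝ) : ℂ) * Complex.I)
        + (Matrix.diagonal fun j => ((e 2 j : ℝ) : ℂ) * Complex.I)
      = Matrix.diagonal (fun j => ((a j : ℝ) : ℂ) * Complex.I) := by
    rw [Matrix.diagonal_add, Matrix.diagonal_add]
    refine congrArg Matrix.diagonal (funext fun j => ?_)
    fin_cases j <;>
      simp only [he, Fin.isValue, show ((0:Fin 3) = 1) = False by simp,
        show ((0:Fin 3) = 2) = False by simp, show ((1:Fin 3) = 0) = False by simp,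
        show ((1:Fin 3) = 2) = False by simp, show ((2:Fin 3) = 0) = False by simp,
        show ((2:Fin 3) = 1) = False by simp, if_true, if_false, eq_self_iff_true] <;>
      push_cast <;> linear_combination (-(Complex.I)/2) * hsumC
  have hBd : B = P * Matrix.diagonal (fun j => ((a j : ℝ) : ℂ) * Complex.I) * Pᴴ := by
    rw [hB, hb' 0, hb' 1, hb' 2, ← Matrix.add_mul, ← Matrix.add_mul, ← Matrix.mul_add,
      ← Matrix.mul_add, hdsum]
  have hssinB : ssin B
      = P * Matrix.diagonal (fun j => Complex.sin ((a j : ℝ) : ℂ) * Complex.I) * Pᴴ := by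
    rw [hBd, ssindiag P hP]
    simp only [half_exp_sub]
  have htr : (ssin B).trace
      = (Complex.sin ((a 0 : ℝ) : ℂ) + Complex.sin ((a 1 : ℝ) : ℂ)
          + Complex.sin ((a 2 : ℝ) : ℂ)) * Complex.I := by
    rw [hssinB, Matrix.trace_mul_cycle, hP', one_mul, Matrix.trace_diagonal,
      Fin.sum_univ_three]
    ring
  have hkey := sin_sum_zero ((a 0 : ℝ) : ℂ) ((a 1 : ℝ) : ℂ) ((a 2 : ℝ) : ℂ) hsumC
  have hFfun : (fun j => Complex.sin ((e 0 j : ℝ) : ℂ) * Complex.I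
        * (Complex.sin ((e 1 j : ℝ) : ℂ) * Complex.I)
        * (Complex.sin ((e 2 j : ℝ) : ℂ) * Complex.I))
      = (fun _ : Fin 3 => (1/4 : ℂ) * ((Complex.sin ((a 0 : ℝ) : ℂ)
          + Complex.sin ((a 1 : ℝ) : ℂ) + Complex.sin ((a 2 : ℝ) : ℂ)) * Complex.I)) := by
    funext j
    fin_cases j <;>
      simp only [he, Fin.isValue, show ((0:Fin 3) = 1) = False by simp,
        show ((0:Fin 3) = 2) = False by simp, show ((1:Fin 3) = 0) = False by simp,
        show ((1:Fin 3) = 2) = False by simp, show ((2:Fin 3) = 0) = False by simp,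
        show ((2:Fin 3) = 1) = False by simp, if_true, if_false, eq_self_iff_true,
        Complex.ofReal_neg, Complex.ofReal_div, neg_div, Complex.sin_neg] <;>
      push_cast <;>
      simp only [neg_div, Complex.sin_neg] <;>
      linear_combination (-(1/4) * Complex.I) * hkey +
        (Complex.sin ((a 0 : ℂ)/2) * Complex.sin ((a 1 : ℂ)/2) * Complex.sin ((a 2 : ℂ)/2)
          * Complex.I) * Complex.I_sq
  have hconst : Matrix.diagonal (fun _ : Fin 3 => (1/4 : ℂ) * ((Complex.sin ((a 0 : ℝ) : ℂ)
          + Complex.sin ((a 1 : ℝ) : ℂ) + Complex.sin ((a 2 : ℝ) : ℂ)) * Complex.I))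
      = ((1/4 : ℂ) * ((Complex.sin ((a 0 : ℝ) : ℂ) + Complex.sin ((a 1 : ℝ) : ℂ)
          + Complex.sin ((a 2 : ℝ) : ℂ)) * Complex.I)) • (1 : Matrix (Fin 3) (Fin 3) ℂ) := by
    rw [← Matrix.diagonal_one, ← Matrix.diagonal_smul]
    exact congrArg Matrix.diagonal (funext fun j => by simp)
  rw [hssin 0, hssin 1, hssin 2, conj_mul3 P hP', conj_mul3 P hP', htr, hFfun, hconst,
    mul_smul_comm, smul_mul_assoc, mul_one, hP]
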